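/- Let D+ be a canonical positive Boolean automaton double-cycle with left cycle of size n and right cycle of size m (f_c(x) = x^ℓ_{n-1} ∧ x^r_{m-1}, all other automata copy their predecessor). For any configuration x containing at least one automaton at state 0, there exists a sequence of at most 2n+m-3 asynchronous single-automaton updates transforming x into the all-zeros configuration (0^n, 0^m). -/

import Mathlib

/-- A configuration of a Boolean automaton double-cycle with cycles of sizes `n`
and `m`: the shared automaton `c` is index 0 of both cycles (so valid
configurations satisfy `x.1 0 = x.2 0`). -/
abbrev Cfg (n m : ℕ) := (Fin n → Bool) × (Fin m → Bool)

/-- One asynchronous single-automaton update in a double-cycle whose shared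
automaton `c` computes `fc`; every non-shared automaton copies its predecessor. -/
inductive Step {n m : ℕ} (fc : Cfg n m → Bool) : Cfg n m → Cfg n m → Prop
  | left (x : Cfg n m) (i : Fin n) (hi : 1 ≤ i.val) :
      Step fc x (Function.update x.1 i (x.1 ⟨i.val - 1, by have := i.isLt; omega⟩), x.2)
  | right (x : Cfg n m) (j : Fin m) (hj : 1 ≤ j.val) :
      Step fc x (x.1, Function.update x.2 j (x.2 ⟨j.val - 1, by have := j.isLt; omega⟩))
  | center (x : Cfg n m) (i : Fin n) (j : Fin m) (hi : i.val = 0) (hj : j.val = 0) :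
      Step fc x (Function.update x.1 i (fc x), Function.update x.2 j (fc x))

/-- `Steps fc k x y`: configuration `y` is obtained from `x` by exactly `k`
asynchronous single-automaton updates. -/
def Steps {n m : ℕ} (fc : Cfg n m → Bool) : ℕ → Cfg n m → Cfg n m → Prop
  | 0, x, y => x = y
  | k + 1, x, y => ∃ z, Step fc x z ∧ Steps fc k z y

namespace DCAux

variable {n m : ℕ} {fc : Cfg n m → Bool}

theorem steps_trans : ∀ {k l : ℕ} {x y z : Cfg n m},
    Steps fc k x y → Steps fc l y z → Steps fc (k + l) x z := by
  intro k
  induction k with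
  | zero => intro l x y z h1 h2; cases h1; simpa using h2
  | succ k ih =>
    intro l x y z h1 h2
    obtain ⟨w, hw, hs⟩ := h1
    have e : k + 1 + l = (k + l) + 1 := by omega
    rw [e]
    exact ⟨w, hw, ih hs h2⟩

theorem propL (fc : Cfg n m → Bool) :
    ∀ (k : ℕ) (x : Cfg n m) (a : ℕ) (ha : a + k < n),
      x.1 ⟨a, by omega⟩ = false →
      ∃ y : Cfg n m, Steps fc k x y ∧ y.2 = x.2 ∧
        ∀ i : Fin n, y.1 i = if a ≤ i.val ∧ i.val ≤ a + k then false else x.1 i := by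
  intro k
  induction k with
  | zero =>
    intro x a ha h0
    refine ⟨x, rfl, rfl, fun i => ?_⟩
    split
    · next hi =>
      have hia : i = ⟨a, by omega⟩ := Fin.ext (show i.val = a by omega)
      rw [hia]; exact h0
    · rfl
  | succ k ih =>
    intro x a ha h0
    obtain ⟨y, hy, hy2, hy1⟩ := ih x a (by omega) h0
    have hprev : y.1 ⟨a + k, by omega⟩ = false := by
      rw [hy1]; exact if_pos (show a ≤ a + k ∧ a + k ≤ a + k from ⟨by omega, by omega⟩)
    have hstep := Step.left (fc := fc) y ⟨a + k + 1, by omega⟩ (by simp)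
    refine ⟨(Function.update y.1 ⟨a + k + 1, by omega⟩ false, y.2), ?_, by rw [hy2],
      fun i => ?_⟩
    · have h1 : Steps fc 1 y (Function.update y.1 ⟨a + k + 1, by omega⟩ false, y.2) := by
        refine ⟨_, hstep, ?_⟩
        show (Function.update y.1 _ _, y.2) = _
        exact Prod.ext_iff.mpr
          ⟨congrArg (fun v => Function.update y.1 ⟨a + k + 1, by omega⟩ v) hprev, rfl⟩
      exact steps_trans hy h1
    · by_cases hib : i = (⟨a + k + 1, by omega⟩ : Fin n)
      · subst hib
        show Function.update y.1 _ false _ = _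
        rw [Function.update_self]
        exact (if_pos (show a ≤ a + k + 1 ∧ a + k + 1 ≤ a + (k + 1) from
          ⟨by omega, by omega⟩)).symm
      · show Function.update y.1 _ false i = _
        rw [Function.update_of_ne hib, hy1]
        have hne : i.val ≠ a + k + 1 := fun h => hib (Fin.ext h)
        by_cases hcond : a ≤ i.val ∧ i.val ≤ a + k
        · rw [if_pos hcond, if_pos ⟨hcond.1, by omega⟩]
        · rw [if_neg hcond, if_neg (by omega)]

theorem propR (fc : Cfg n m → Bool) :
    ∀ (k : ℕ) (x : Cfg n m) (a : ℕ) (ha : a + k < m),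
      x.2 ⟨a, by omega⟩ = false →
      ∃ y : Cfg n m, Steps fc k x y ∧ y.1 = x.1 ∧
        ∀ j : Fin m, y.2 j = if a ≤ j.val ∧ j.val ≤ a + k then false else x.2 j := by
  intro k
  induction k with
  | zero =>
    intro x a ha h0
    refine ⟨x, rfl, rfl, fun j => ?_⟩
    split
    · next hj =>
      have hja : j = ⟨a, by omega⟩ := Fin.ext (show j.val = a by omega)
      rw [hja]; exact h0
    · rfl
  | succ k ih =>
    intro x a ha h0
    obtain ⟨y, hy, hy1, hy2⟩ := ih x a (by omega) h0
    have hprev : y.2 ⟨a + k, by omega⟩ = false := by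
      rw [hy2]; exact if_pos (show a ≤ a + k ∧ a + k ≤ a + k from ⟨by omega, by omega⟩)
    have hstep := Step.right (fc := fc) y ⟨a + k + 1, by omega⟩ (by simp)
    refine ⟨(y.1, Function.update y.2 ⟨a + k + 1, by omega⟩ false), ?_, by rw [hy1],
      fun j => ?_⟩
    · have h1 : Steps fc 1 y (y.1, Function.update y.2 ⟨a + k + 1, by omega⟩ false) := by
        refine ⟨_, hstep, ?_⟩
        show (y.1, Function.update y.2 _ _) = _
        exact Prod.ext_iff.mpr
          ⟨rfl, congrArg (fun v => Function.update y.2 ⟨a + k + 1, by omega⟩ v) hprev⟩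
      exact steps_trans hy h1
    · by_cases hjb : j = (⟨a + k + 1, by omega⟩ : Fin m)
      · subst hjb
        show Function.update y.2 _ false _ = _
        rw [Function.update_self]
        exact (if_pos (show a ≤ a + k + 1 ∧ a + k + 1 ≤ a + (k + 1) from
          ⟨by omega, by omega⟩)).symm
      · show Function.update y.2 _ false j = _
        rw [Function.update_of_ne hjb, hy2]
        have hne : j.val ≠ a + k + 1 := fun h => hjb (Fin.ext h)
        by_cases hcond : a ≤ j.val ∧ j.val ≤ a + k
        · rw [if_pos hcond, if_pos ⟨hcond.1, by omega⟩]
        · rw [if_neg hcond, if_neg (by omega)]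

theorem centerStep (hn : 0 < n) (hm : 0 < m) (x : Cfg n m) (hfc : fc x = false) :
    Step fc x (Function.update x.1 ⟨0, hn⟩ false, Function.update x.2 ⟨0, hm⟩ false) := by
  have h := Step.center (fc := fc) x ⟨0, hn⟩ ⟨0, hm⟩ rfl rfl
  rwa [hfc] at h

end DCAux

theorem DCAux.main (n m : ℕ) (hn : 0 < n) (hm : 0 < m) (fc : Cfg n m → Bool)
    (hfc : ∀ (h1 : n - 1 < n) (h2 : m - 1 < m) (y : Cfg n m),
      y.1 ⟨n - 1, h1⟩ = false ∨ y.2 ⟨m - 1, h2⟩ = false → fc y = false)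
    (x : Cfg n m) (hshare : x.1 ⟨0, hn⟩ = x.2 ⟨0, hm⟩)
    (hzero : (∃ i, x.1 i = false) ∨ (∃ j, x.2 j = false)) :
    ∃ k ≤ 2 * n + m - 3,
      Steps fc k x ((fun _ => false, fun _ => false) : Cfg n m) := by
  by_cases hsh : x.1 ⟨0, hn⟩ = false
  · -- shared automaton already 0: just propagate around both cycles
    obtain ⟨y, hy, hy2, hy1⟩ := propL fc (n - 1) x 0 (by omega) hsh
    obtain ⟨z, hz, hz1, hz2⟩ := propR fc (m - 1) y 0 (by omega)
      (by rw [hy2, ← hshare]; exact hsh)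
    refine ⟨(n - 1) + (m - 1), by omega, ?_⟩
    have hzeq : z = ((fun _ => false, fun _ => false) : Cfg n m) := by
      refine Prod.ext_iff.mpr ⟨funext fun i => ?_, funext fun j => ?_⟩
      · rw [hz1, hy1]
        exact if_pos ⟨Nat.zero_le _, by have := i.isLt; omega⟩
      · rw [hz2]
        exact if_pos ⟨Nat.zero_le _, by have := j.isLt; omega⟩
    rw [← hzeq]; exact steps_trans hy hz
  · rcases hzero with ⟨i, hi⟩ | ⟨j, hj⟩
    · -- a zero in the left cycle at position i ≥ 1
      have hi1 : 1 ≤ i.val := by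
        by_contra h
        exact hsh (by rw [show (⟨0, hn⟩ : Fin n) = i from Fin.ext (show (0:ℕ) = i.val by omega)]; exact hi)
      -- propagate it to position n-1
      obtain ⟨y, hy, hy2, hy1⟩ := propL fc (n - 1 - i.val) x i.val
        (by have := i.isLt; omega) hi
      have hend : y.1 ⟨n - 1, by omega⟩ = false := by
        rw [hy1]
        exact if_pos (show i.val ≤ n - 1 ∧ n - 1 ≤ i.val + (n - 1 - i.val) from
          ⟨by have := i.isLt; omega, by have := i.isLt; omega⟩)
      -- center update
      have hstepc := centerStep hn hm y (hfc (by omega) (by omega) y (Or.inl hend))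
      have hstep1 : Steps fc 1 y
          (Function.update y.1 ⟨0, hn⟩ false, Function.update y.2 ⟨0, hm⟩ false) :=
        ⟨_, hstepc, rfl⟩
      -- propagate zeros around the left cycle, then the right cycle
      obtain ⟨w, hw, hw2, hw1⟩ := propL fc (n - 1)
        (Function.update y.1 ⟨0, hn⟩ false, Function.update y.2 ⟨0, hm⟩ false) 0
        (by omega) (by show Function.update y.1 (⟨0, hn⟩ : Fin n) false (⟨0, hn⟩ : Fin n) = false; exact Function.update_self _ _ _)
      obtain ⟨v, hv, hv1, hv2⟩ := propR fc (m - 1) w 0 (by omega)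
        (by rw [hw2]; show Function.update y.2 (⟨0, hm⟩ : Fin m) false (⟨0, hm⟩ : Fin m) = false; exact Function.update_self _ _ _)
      refine ⟨(n - 1 - i.val) + (1 + ((n - 1) + (m - 1))), by have := i.isLt; omega, ?_⟩
      have hveq : v = ((fun _ => false, fun _ => false) : Cfg n m) := by
        refine Prod.ext_iff.mpr ⟨funext fun i' => ?_, funext fun j' => ?_⟩
        · rw [hv1, hw1]
          exact if_pos ⟨Nat.zero_le _, by have := i'.isLt; omega⟩
        · rw [hv2]
          exact if_pos ⟨Nat.zero_le _, by have := j'.isLt; omega⟩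
      rw [← hveq]
      exact steps_trans hy (steps_trans hstep1 (steps_trans hw hv))
    · -- a zero in the right cycle at position j ≥ 1
      have hj1 : 1 ≤ j.val := by
        by_contra h
        exact hsh (by rw [hshare, show (⟨0, hm⟩ : Fin m) = j from Fin.ext (show (0:ℕ) = j.val by omega)]; exact hj)
      obtain ⟨y, hy, hy1, hy2⟩ := propR fc (m - 1 - j.val) x j.val
        (by have := j.isLt; omega) hj
      have hend : y.2 ⟨m - 1, by omega⟩ = false := by
        rw [hy2]
        exact if_pos (show j.val ≤ m - 1 ∧ m - 1 ≤ j.val + (m - 1 - j.val) from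
          ⟨by have := j.isLt; omega, by have := j.isLt; omega⟩)
      have hstepc := centerStep hn hm y (hfc (by omega) (by omega) y (Or.inr hend))
      have hstep1 : Steps fc 1 y
          (Function.update y.1 ⟨0, hn⟩ false, Function.update y.2 ⟨0, hm⟩ false) :=
        ⟨_, hstepc, rfl⟩
      -- propagate around left cycle fully, then fill right positions 1..j-1
      obtain ⟨w, hw, hw2, hw1⟩ := propL fc (n - 1)
        (Function.update y.1 ⟨0, hn⟩ false, Function.update y.2 ⟨0, hm⟩ false) 0
        (by omega) (by show Function.update y.1 (⟨0, hn⟩ : Fin n) false (⟨0, hn⟩ : Fin n) = false; exact Function.update_self _ _ _)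
      obtain ⟨v, hv, hv1, hv2⟩ := propR fc (j.val - 1) w 0 (by have := j.isLt; omega)
        (by rw [hw2]; show Function.update y.2 (⟨0, hm⟩ : Fin m) false (⟨0, hm⟩ : Fin m) = false; exact Function.update_self _ _ _)
      refine ⟨(m - 1 - j.val) + (1 + ((n - 1) + (j.val - 1))), by have := j.isLt; omega, ?_⟩
      have hveq : v = ((fun _ => false, fun _ => false) : Cfg n m) := by
        refine Prod.ext_iff.mpr ⟨funext fun i' => ?_, funext fun j' => ?_⟩
        · rw [hv1, hw1]
          exact if_pos ⟨Nat.zero_le _, by have := i'.isLt; omega⟩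
        · rw [hv2]
          by_cases hc : j'.val ≤ j.val - 1
          · exact if_pos ⟨Nat.zero_le _, by omega⟩
          · rw [if_neg (by omega), hw2]
            have hj' : j' ≠ (⟨0, hm⟩ : Fin m) := by
              intro h
              exact hc (by rw [h]; exact Nat.zero_le _)
            show Function.update y.2 _ false j' = false
            rw [Function.update_of_ne hj', hy2]
            exact if_pos ⟨by omega, by have := j'.isLt; omega⟩
      rw [← hveq]
      exact steps_trans hy (steps_trans hstep1 (steps_trans hw hv))

/-- In a canonical positive double-cycle, any configuration with at least one
automaton at state 0 reaches the all-zeros configuration in at most 2n+m-3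
asynchronous updates. -/
theorem stmt7 (n m : ℕ) (hn : 0 < n) (hm : 0 < m) (x : Cfg n m)
    (hshare : x.1 ⟨0, hn⟩ = x.2 ⟨0, hm⟩)
    (hzero : (∃ i, x.1 i = false) ∨ (∃ j, x.2 j = false)) :
    ∃ k ≤ 2 * n + m - 3,
      Steps (fun y : Cfg n m => y.1 ⟨n - 1, by omega⟩ && y.2 ⟨m - 1, by omega⟩)
        k x ((fun _ => false, fun _ => false) : Cfg n m) := by
  refine DCAux.main n m hn hm _ ?_ x hshare hzero
  rintro _ _ y (h | h)
  · show (y.1 ⟨n - 1, by omega⟩ && y.2 ⟨m - 1, by omega⟩) = false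
    rw [h, Bool.false_and]
  · show (y.1 ⟨n - 1, by omega⟩ && y.2 ⟨m - 1, by omega⟩) = false
    rw [h, Bool.and_false]
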